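/- Let σ ∈ S_k and τ ∈ S_n with σ ≤ τ, and let ⟨σ⟩ be an occurrence of σ in τ. If the pair (⟨σ⟩, τ) is separated, then the Möbius function of the occurrence poset [⟨σ⟩, τ] satisfies μ(⟨σ⟩, τ) = (−1)^{n−k}. -/

import Mathlib

/-- `f` gives an occurrence of the pattern `σ` in `τ`: the positions `f 0 < f 1 < ⋯`
carry letters of `τ` in the same relative order as `σ`. -/
def IsOccurrence {k n : ℕ} (σ : Equiv.Perm (Fin k)) (τ : Equiv.Perm (Fin n))
    (f : Fin k → Fin n) : Prop :=
  StrictMono f ∧ ∀ i j : Fin k, σ i < σ j ↔ τ (f i) < τ (f j)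

/-- Two sets of kept positions `S, S'` (each containing the marked positions `A`)
determine the same element of the occurrence poset: the words of `τ` read along `S`
and along `S'` are order isomorphic, with the marked positions corresponding. -/
def OccEquiv {n : ℕ} (τ : Equiv.Perm (Fin n)) (A S S' : Finset (Fin n)) : Prop :=
  ∃ g : {x // x ∈ S} ≃o {x // x ∈ S'},
    (∀ a b : {x // x ∈ S}, τ a.1 < τ b.1 ↔ τ (g a).1 < τ (g b).1) ∧
    (∀ a : {x // x ∈ S}, a.1 ∈ A ↔ (g a).1 ∈ A)

/-- Representatives of elements of the occurrence poset with marked positions `A`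
and ground set `U`: sets of kept positions between `A` and `U`. -/
def OccCarrier {n : ℕ} (A U : Finset (Fin n)) := {S : Finset (Fin n) // A ⊆ S ∧ S ⊆ U}

/-- The occurrence poset `[⟨σ⟩, τ]` (with ground set `U`): kept-position sets modulo
order isomorphism respecting the marked occurrence. -/
def OccPoset {n : ℕ} (τ : Equiv.Perm (Fin n)) (A U : Finset (Fin n)) :=
  Quot (fun S S' : OccCarrier A U => OccEquiv τ A S.1 S'.1)

def occMk {n : ℕ} (τ : Equiv.Perm (Fin n)) (A U : Finset (Fin n)) (S : OccCarrier A U) :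
    OccPoset τ A U :=
  Quot.mk _ S

/-- The partial order of the occurrence poset: deletion of unmarked letters. -/
def occLE {n : ℕ} (τ : Equiv.Perm (Fin n)) (A U : Finset (Fin n))
    (q q' : OccPoset τ A U) : Prop :=
  ∃ S S' : OccCarrier A U, q = occMk τ A U S ∧ q' = occMk τ A U S' ∧ S.1 ⊆ S'.1

/-- The bottom element `⟨σ⟩` of the occurrence poset. -/
def occBot {n : ℕ} (τ : Equiv.Perm (Fin n)) (A U : Finset (Fin n)) (h : A ⊆ U) :
    OccPoset τ A U :=
  occMk τ A U ⟨A, subset_rfl, h⟩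

/-- The top element `τ` of the occurrence poset. -/
def occTop {n : ℕ} (τ : Equiv.Perm (Fin n)) (A U : Finset (Fin n)) (h : A ⊆ U) :
    OccPoset τ A U :=
  occMk τ A U ⟨U, h, subset_rfl⟩

/-- `J` is an interval block of the pattern of `τ` restricted to the kept positions `S`:
`J` consists of at least two kept positions, consecutive among `S` both in position and
in value. -/
def IsBlockIn {n : ℕ} (τ : Equiv.Perm (Fin n)) (S J : Finset (Fin n)) : Prop :=
  J ⊆ S ∧ 2 ≤ J.card ∧
    (∀ x ∈ J, ∀ y ∈ J, ∀ z ∈ S, x ≤ z → z ≤ y → z ∈ J) ∧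
    (∀ x ∈ J, ∀ y ∈ J, ∀ z ∈ S, τ x ≤ τ z → τ z ≤ τ y → z ∈ J)

/-- The pair (marked occurrence `A`, permutation given by kept positions `S`) has an
interval block: an interval block disjoint from the occurrence. -/
def PairHasBlock {n : ℕ} (τ : Equiv.Perm (Fin n)) (A S : Finset (Fin n)) : Prop :=
  ∃ J : Finset (Fin n), IsBlockIn τ S J ∧ ∀ p ∈ J, p ∉ A

/-- An element of the occurrence poset is interval free if (a representative of) it has
no interval block disjoint from the marked occurrence. -/
def occIntervalFree {n : ℕ} (τ : Equiv.Perm (Fin n)) (A U : Finset (Fin n))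
    (q : OccPoset τ A U) : Prop :=
  ∃ S : OccCarrier A U, q = occMk τ A U S ∧ ¬ PairHasBlock τ A S.1

theorem OccEquiv.card_eq {n : ℕ} {τ : Equiv.Perm (Fin n)} {A S S' : Finset (Fin n)}
    (h : OccEquiv τ A S S') : S.card = S'.card := by
  obtain ⟨g, -, -⟩ := h
  simpa using Fintype.card_congr g.toEquiv

/-- The rank of an element of the occurrence poset: its number of letters minus `k`. -/
def occRank {n : ℕ} (τ : Equiv.Perm (Fin n)) (A U : Finset (Fin n)) (k : ℕ) :
    OccPoset τ A U → ℕ :=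
  Quot.lift (fun S => S.1.card - k) (fun S S' h => by
    have hc := OccEquiv.card_eq h
    show S.1.card - k = S'.1.card - k
    omega)

/-- Positions `p` and `q` lie in the same region: no position between them (inclusive)
is a marked position. -/
def SameRegion {n : ℕ} (A : Finset (Fin n)) (p q : Fin n) : Prop :=
  ∀ z : Fin n, min p q ≤ z → z ≤ max p q → z ∉ A

/-- The pair (occurrence with marked positions `A`, `τ`) is separated: any two letters in
the same region are separated in value by a letter of the occurrence. -/
def Separated {n : ℕ} (τ : Equiv.Perm (Fin n)) (A : Finset (Fin n)) : Prop :=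
  ∀ p q : Fin n, SameRegion A p q → τ p < τ q → ∃ a ∈ A, τ p < τ a ∧ τ a < τ q

/-- The letters at positions `p, q` (with `τ p < τ q`) are similar: same region, and no
letter of the occurrence lies strictly between them in value. -/
def SimilarPos {n : ℕ} (τ : Equiv.Perm (Fin n)) (A : Finset (Fin n)) (p q : Fin n) : Prop :=
  SameRegion A p q ∧ τ p < τ q ∧ ∀ a ∈ A, ¬ (τ p < τ a ∧ τ a < τ q)

/-- A group of similar letters: at least two letters, pairwise similar. -/
def IsSimilarGroup {n : ℕ} (τ : Equiv.Perm (Fin n)) (A : Finset (Fin n))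
    (G : Finset (Fin n)) : Prop :=
  2 ≤ G.card ∧ ∀ p ∈ G, ∀ q ∈ G, τ p < τ q → SimilarPos τ A p q

/-- A maximal group of similar letters: one contained in no strictly larger group. -/
def IsMaxSimilarGroup {n : ℕ} (τ : Equiv.Perm (Fin n)) (A : Finset (Fin n))
    (G : Finset (Fin n)) : Prop :=
  IsSimilarGroup τ A G ∧ ∀ G' : Finset (Fin n), IsSimilarGroup τ A G' → G ⊆ G' → G' = G

/-- The occurrence poset is a boolean algebra: isomorphic to the poset of all subsets of
a finite set, ordered by inclusion. -/
def IsBooleanOccPoset {n : ℕ} (τ : Equiv.Perm (Fin n)) (A U : Finset (Fin n)) : Prop :=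
  ∃ (m : ℕ) (e : OccPoset τ A U ≃ Finset (Fin m)),
    ∀ q q' : OccPoset τ A U, occLE τ A U q q' ↔ e q ⊆ e q'

/-- The pattern poset `P`: permutations of every length, a permutation of length `m` being
an element of `Equiv.Perm (Fin m)` (its standard form). -/
def PatternPoset := Σ m : ℕ, Equiv.Perm (Fin m)

/-- The order of the pattern poset: pattern containment. -/
def patternLE (a b : PatternPoset) : Prop :=
  ∃ f : Fin a.1 → Fin b.1, IsOccurrence a.2 b.2 f

/-- `b` covers `a` in the pattern poset: `a < b` and `b` has one letter more than `a`. -/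
def patternCovers (a b : PatternPoset) : Prop :=
  patternLE a b ∧ a ≠ b ∧ b.1 = a.1 + 1


lemma strictMono_fin_id {α : Type*} [LinearOrder α] [Fintype α] (f : α → α)
    (hf : StrictMono f) (x : α) : f x = x := by
  have hsurj : Function.Surjective f :=
    Finite.surjective_of_injective hf.injective
  let e : α ≃o α := StrictMono.orderIsoOfSurjective f hf hsurj
  have : e = OrderIso.refl α := Subsingleton.elim _ _
  have := congrArg (fun g : α ≃o α => g x) this
  exact this

lemma occEquiv_eq {n : ℕ} {τ : Equiv.Perm (Fin n)} {A S S' : Finset (Fin n)}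
    (hsep : Separated τ A) (hS : A ⊆ S) (hS' : A ⊆ S')
    (h : OccEquiv τ A S S') : S = S' := by
  obtain ⟨g, hval, hmem⟩ := h
  have hfixA : ∀ (a : Fin n) (ha : a ∈ A), ((g ⟨a, hS ha⟩ : {x // x ∈ S'}) : Fin n) = a := by
    intro a ha
    let φ : {x // x ∈ A} → {x // x ∈ A} :=
      fun b => ⟨(g ⟨b.1, hS b.2⟩ : {x // x ∈ S'}), (hmem ⟨b.1, hS b.2⟩).1 b.2⟩
    have hφ : StrictMono φ := by
      intro b c hbc
      have h1 : (⟨b.1, hS b.2⟩ : {x // x ∈ S}) < ⟨c.1, hS c.2⟩ :=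
        Subtype.mk_lt_mk.2 (Subtype.coe_lt_coe.2 hbc)
      have h2 := g.lt_iff_lt.2 h1
      exact Subtype.mk_lt_mk.2 (Subtype.coe_lt_coe.2 h2)
    have := strictMono_fin_id φ hφ ⟨a, ha⟩
    exact congrArg Subtype.val this
  have hfix : ∀ s : {x // x ∈ S}, ((g s : {x // x ∈ S'}) : Fin n) = s.1 := by
    intro s
    by_contra hne
    have hsA : s.1 ∉ A := by
      intro hsa
      apply hne
      have he : (⟨s.1, hS hsa⟩ : {x // x ∈ S}) = s := Subtype.ext rfl
      rw [← he]
      exact hfixA s.1 hsa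
    have hgA : ((g s : {x // x ∈ S'}) : Fin n) ∉ A := fun hga => hsA ((hmem s).2 hga)
    have hcmp : ∀ z (hz : z ∈ A), (s.1 < z ↔ ((g s : {x // x ∈ S'}) : Fin n) < z) := by
      intro z hz
      have hz1 : ((g ⟨z, hS hz⟩ : {x // x ∈ S'}) : Fin n) = z := hfixA z hz
      constructor
      · intro h
        have h1 : s < (⟨z, hS hz⟩ : {x // x ∈ S}) := Subtype.coe_lt_coe.1 h
        have h2 := g.lt_iff_lt.2 h1
        have h3 : ((g s : {x // x ∈ S'}) : Fin n) < ((g ⟨z, hS hz⟩ : {x // x ∈ S'}) : Fin n) :=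
          Subtype.coe_lt_coe.2 h2
        rwa [hz1] at h3
      · intro h
        have h3 : ((g s : {x // x ∈ S'}) : Fin n) < ((g ⟨z, hS hz⟩ : {x // x ∈ S'}) : Fin n) := by
          rw [hz1]; exact h
        have h2 : (g s : {x // x ∈ S'}) < g ⟨z, hS hz⟩ := Subtype.coe_lt_coe.1 h3
        have h1 := g.lt_iff_lt.1 h2
        exact Subtype.coe_lt_coe.2 h1
    have hreg : SameRegion A s.1 ((g s : {x // x ∈ S'}) : Fin n) := by
      intro z h1 h2 hz
      have hzs : z ≠ s.1 := fun e => hsA (e ▸ hz)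
      have hzg : z ≠ ((g s : {x // x ∈ S'}) : Fin n) := fun e => hgA (e ▸ hz)
      rcases lt_or_gt_of_ne (Ne.symm hne) with hlt | hlt
      · have h1' : s.1 ≤ z := by rw [min_eq_left hlt.le] at h1; exact h1
        have h2' : z ≤ ((g s : {x // x ∈ S'}) : Fin n) := by
          rw [max_eq_right hlt.le] at h2; exact h2
        have hsz : s.1 < z := lt_of_le_of_ne h1' (Ne.symm hzs)
        have hzg' : z < ((g s : {x // x ∈ S'}) : Fin n) := lt_of_le_of_ne h2' hzg
        exact absurd ((hcmp z hz).1 hsz) (asymm hzg')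
      · have h1' : ((g s : {x // x ∈ S'}) : Fin n) ≤ z := by
          rw [min_eq_right hlt.le] at h1; exact h1
        have h2' : z ≤ s.1 := by rw [max_eq_left hlt.le] at h2; exact h2
        have hgz : ((g s : {x // x ∈ S'}) : Fin n) < z := lt_of_le_of_ne h1' (Ne.symm hzg)
        have hzs' : z < s.1 := lt_of_le_of_ne h2' hzs
        exact absurd ((hcmp z hz).2 hgz) (asymm hzs')
    have hτne : τ s.1 ≠ τ ((g s : {x // x ∈ S'}) : Fin n) :=
      fun e => hne (τ.injective e).symm
    rcases lt_or_gt_of_ne hτne with hlt | hlt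
    · obtain ⟨a, ha, h1, h2⟩ := hsep _ _ hreg hlt
      have he : ((g ⟨a, hS ha⟩ : {x // x ∈ S'}) : Fin n) = a := hfixA a ha
      have hv := (hval s ⟨a, hS ha⟩).1 h1
      rw [he] at hv
      exact absurd hv (asymm h2)
    · have hreg' : SameRegion A ((g s : {x // x ∈ S'}) : Fin n) s.1 :=
        fun z u v => hreg z (by rwa [min_comm]) (by rwa [max_comm])
      obtain ⟨a, ha, h1, h2⟩ := hsep _ _ hreg' hlt
      have he : ((g ⟨a, hS ha⟩ : {x // x ∈ S'}) : Fin n) = a := hfixA a ha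
      have hv := (hval ⟨a, hS ha⟩ s).1 h2
      rw [he] at hv
      exact absurd hv (asymm h1)
  have hsub : S ⊆ S' := by
    intro x hx
    have h := (g ⟨x, hx⟩).2
    rwa [hfix ⟨x, hx⟩] at h
  have hcard : S'.card ≤ S.card := le_of_eq (by simpa using (Fintype.card_congr g.toEquiv.symm))
  exact Finset.eq_of_subset_of_card_le hsub hcard


lemma occEquiv_carrier_eq {n : ℕ} {τ : Equiv.Perm (Fin n)} {A : Finset (Fin n)}
    (hsep : Separated τ A) {S S' : OccCarrier A (Finset.univ : Finset (Fin n))}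
    (h : OccEquiv τ A S.1 S'.1) : S = S' :=
  Subtype.ext (occEquiv_eq hsep S.2.1 S'.2.1 h)

lemma occMk_inj {n : ℕ} {τ : Equiv.Perm (Fin n)} {A : Finset (Fin n)}
    (hsep : Separated τ A) {S S' : OccCarrier A (Finset.univ : Finset (Fin n))}
    (h : occMk τ A Finset.univ S = occMk τ A Finset.univ S') : S = S' := by
  have he := Quot.eqvGen_exact h
  clear h
  induction he with
  | rel _ _ hr => exact occEquiv_carrier_eq hsep hr
  | refl => rfl
  | symm _ _ _ ih => exact ih.symm
  | trans _ _ _ _ _ ih1 ih2 => exact ih1.trans ih2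

/-- if the pair `(⟨σ⟩, τ)` is separated then the Möbius function of the
occurrence poset `[⟨σ⟩, τ]` satisfies `μ(⟨σ⟩, τ) = (-1) ^ (n - k)`. -/
theorem mobius_occurrence_poset_separated {k n : ℕ}
    (σ : Equiv.Perm (Fin k)) (τ : Equiv.Perm (Fin n))
    (f : Fin k → Fin n) (hf : IsOccurrence σ τ f)
    (A : Finset (Fin n)) (hA : A = Finset.image f Finset.univ)
    (hsep : Separated τ A)
    (mu : OccPoset τ A Finset.univ → OccPoset τ A Finset.univ → ℤ)
    (hone : ∀ q, mu q q = 1)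
    (hzero : ∀ q q', ¬ occLE τ A Finset.univ q q' → mu q q' = 0)
    (hrec : ∀ q q', occLE τ A Finset.univ q q' → q ≠ q' →
      mu q q' = - ∑ᶠ x ∈ {x : OccPoset τ A Finset.univ |
        occLE τ A Finset.univ q x ∧ occLE τ A Finset.univ x q' ∧ x ≠ q'}, mu q x) :
    mu (occBot τ A Finset.univ (Finset.subset_univ A))
      (occTop τ A Finset.univ (Finset.subset_univ A)) = (-1 : ℤ) ^ (n - k) := by
  classical
  have hAU : A ⊆ (Finset.univ : Finset (Fin n)) := Finset.subset_univ A
  set bot : OccPoset τ A Finset.univ := occBot τ A Finset.univ hAU with hbotdef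
  have hbotmk : bot = occMk τ A Finset.univ ⟨A, subset_rfl, hAU⟩ := rfl
  have hcardA : A.card = k := by
    rw [hA, Finset.card_image_of_injective _ hf.1.injective, Finset.card_univ, Fintype.card_fin]
  -- occLE characterization
  have hle_iff : ∀ S S' : OccCarrier A Finset.univ,
      (occLE τ A Finset.univ (occMk τ A Finset.univ S) (occMk τ A Finset.univ S') ↔ S.1 ⊆ S'.1) := by
    intro S S'
    constructor
    · rintro ⟨T, T', h1, h2, h3⟩
      rw [← occMk_inj hsep h1, ← occMk_inj hsep h2] at h3
      exact h3
    · intro h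
      exact ⟨S, S', rfl, rfl, h⟩
  -- main induction
  have key : ∀ m : ℕ, ∀ S : OccCarrier A Finset.univ, S.1.card ≤ m →
      mu bot (occMk τ A Finset.univ S) = (-1 : ℤ) ^ (S.1.card - k) := by
    intro m
    induction m with
    | zero =>
      intro S hS
      have hSA : S.1 = A := by
        have : A.card = 0 := Nat.le_zero.mp (le_trans (Finset.card_le_card S.2.1) hS)
        have hA0 : A = ∅ := Finset.card_eq_zero.mp this
        have : S.1.card = 0 := Nat.le_zero.mp hS
        rw [Finset.card_eq_zero.mp this, hA0]
      have : occMk τ A Finset.univ S = bot := by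
        rw [hbotmk]; congr 1; exact Subtype.ext hSA
      rw [this, hone, hSA, hcardA]
      simp
    | succ m ih =>
      intro S hS
      by_cases hSA : S.1 = A
      · have : occMk τ A Finset.univ S = bot := by
          rw [hbotmk]; congr 1; exact Subtype.ext hSA
        rw [this, hone, hSA, hcardA]
        simp
      · -- A ⊂ S.1
        have hAS : A ⊂ S.1 := Finset.ssubset_iff_subset_ne.mpr ⟨S.2.1, fun e => hSA e.symm⟩
        have hne : bot ≠ occMk τ A Finset.univ S := by
          intro e
          rw [hbotmk] at e
          exact hSA (congrArg Subtype.val (occMk_inj hsep e)).symm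
        have hle : occLE τ A Finset.univ bot (occMk τ A Finset.univ S) := by
          rw [hbotmk]; exact (hle_iff _ _).mpr S.2.1
        rw [hrec bot (occMk τ A Finset.univ S) hle hne]
        -- describe the open interval as a finset image
        set D : Finset (Finset (Fin n)) :=
          S.1.powerset.filter (fun T => A ⊆ T ∧ T ≠ S.1) with hD
        have memD : ∀ T, T ∈ D ↔ T ⊆ S.1 ∧ A ⊆ T ∧ T ≠ S.1 := by
          intro T
          simp [hD, Finset.mem_filter, Finset.mem_powerset, and_assoc]
        set φ : Finset (Fin n) → OccPoset τ A Finset.univ :=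
          fun T => occMk τ A Finset.univ ⟨A ∪ T, Finset.subset_union_left, Finset.subset_univ _⟩ with hφ
        have hφmk : ∀ T (hT : A ⊆ T), φ T = occMk τ A Finset.univ ⟨T, hT, Finset.subset_univ _⟩ := by
          intro T hT
          simp only [hφ]
          congr 1
          exact Subtype.ext (Finset.union_eq_right.mpr hT)
        have hset : {x : OccPoset τ A Finset.univ |
            occLE τ A Finset.univ bot x ∧ occLE τ A Finset.univ x (occMk τ A Finset.univ S) ∧ x ≠ occMk τ A Finset.univ S}
            = ↑(D.image φ) := by
          ext x
          simp only [Set.mem_setOf_eq, Finset.coe_image, Set.mem_image, Finset.mem_coe]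
          constructor
          · rintro ⟨-, ⟨T, T', h1, h2, h3⟩, h4⟩
            have hT' : T' = S := occMk_inj hsep h2.symm
            subst hT'
            refine ⟨T.1, (memD T.1).mpr ⟨h3, T.2.1, ?_⟩, ?_⟩
            · intro e
              exact h4 (by rw [h1]; congr 1; exact Subtype.ext e)
            · rw [hφmk T.1 T.2.1, h1]
              congr 1
          · rintro ⟨T, hT, rfl⟩
            obtain ⟨hTS, hAT, hTne⟩ := (memD T).mp hT
            rw [hφmk T hAT]
            refine ⟨?_, ?_, ?_⟩
            · rw [hbotmk]; exact (hle_iff _ _).mpr hAT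
            · exact (hle_iff _ _).mpr hTS
            · intro e
              exact hTne (congrArg Subtype.val (occMk_inj hsep e))
        rw [hset, finsum_mem_coe_finset]
        have hφinj : ∀ T ∈ D, ∀ T' ∈ D, φ T = φ T' → T = T' := by
          intro T hT T' hT' he
          obtain ⟨-, hAT, -⟩ := (memD T).mp hT
          obtain ⟨-, hAT', -⟩ := (memD T').mp hT'
          rw [hφmk T hAT, hφmk T' hAT'] at he
          exact congrArg Subtype.val (occMk_inj hsep he)
        rw [Finset.sum_image hφinj]
        have hval : ∀ T ∈ D, mu bot (φ T) = (-1 : ℤ) ^ (T.card - k) := by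
          intro T hT
          obtain ⟨hTS, hAT, hTne⟩ := (memD T).mp hT
          have hlt : T.card < S.1.card :=
            Finset.card_lt_card (Finset.ssubset_iff_subset_ne.mpr ⟨hTS, hTne⟩)
          rw [hφmk T hAT]
          refine ih ⟨T, hAT, Finset.subset_univ _⟩ ?_
          show T.card ≤ m
          omega
        rw [Finset.sum_congr rfl hval]
        -- the alternating sum identity
        have hbij : ∑ T ∈ D, (-1 : ℤ) ^ (T.card - k)
            = ∑ R ∈ (S.1 \ A).powerset.erase (S.1 \ A), (-1 : ℤ) ^ R.card := by
          apply Finset.sum_nbij' (fun T => T \ A) (fun R => A ∪ R)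
          · intro T hT
            obtain ⟨hTS, hAT, hTne⟩ := (memD T).mp hT
            rw [Finset.mem_erase, Finset.mem_powerset]
            constructor
            · intro e
              exact hTne (by
                have := congrArg (fun X => A ∪ X) e
                simpa [Finset.union_sdiff_of_subset hAT,
                  Finset.union_sdiff_of_subset S.2.1] using this)
            · exact Finset.sdiff_subset_sdiff hTS subset_rfl
          · intro R hR
            rw [Finset.mem_erase, Finset.mem_powerset] at hR
            obtain ⟨hRne, hRS⟩ := hR
            rw [memD]
            refine ⟨Finset.union_subset S.2.1 (hRS.trans Finset.sdiff_subset), Finset.subset_union_left, ?_⟩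
            intro e
            apply hRne
            have : (A ∪ R) \ A = S.1 \ A := by rw [e]
            rwa [Finset.union_sdiff_cancel_left (Finset.sdiff_disjoint.symm.mono_right hRS)] at this
          · intro T hT
            obtain ⟨-, hAT, -⟩ := (memD T).mp hT
            exact Finset.union_sdiff_of_subset hAT
          · intro R hR
            rw [Finset.mem_erase, Finset.mem_powerset] at hR
            exact Finset.union_sdiff_cancel_left (Finset.sdiff_disjoint.symm.mono_right hR.2)
          · intro T hT
            obtain ⟨-, hAT, -⟩ := (memD T).mp hT
            rw [Finset.card_sdiff_of_subset hAT, hcardA]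
        rw [hbij]
        have hSne : S.1 \ A ≠ ∅ := by
          intro e
          exact hSA (Finset.eq_of_subset_of_card_le S.2.1 (by
            have := Finset.card_sdiff_of_subset S.2.1
            rw [e, Finset.card_empty] at this
            omega)).symm
        have htot : ∑ R ∈ (S.1 \ A).powerset, (-1 : ℤ) ^ R.card = 0 := by
          rw [Finset.sum_powerset_neg_one_pow_card, if_neg hSne]
        have hmem : (S.1 \ A) ∈ (S.1 \ A).powerset := Finset.mem_powerset_self _
        have := Finset.add_sum_erase _ (fun R => (-1 : ℤ) ^ R.card) hmem
        rw [htot] at this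
        have hcard : (S.1 \ A).card = S.1.card - k := by
          rw [Finset.card_sdiff_of_subset S.2.1, hcardA]
        rw [← hcard]
        linarith [this]
  have hfin := key n ⟨Finset.univ, hAU, subset_rfl⟩ (by simp)
  have hcard2 : ((⟨Finset.univ, hAU, subset_rfl⟩ : OccCarrier A Finset.univ) :
      Finset (Fin n)).card = n := by simp
  rw [hcard2] at hfin
  exact hfin
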